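/- Let L/K be a Galois extension that is not small. Then there exist an integer d > 1 and an infinite family of Galois subextensions of L/K, all of degree exactly d over K. -/

import Mathlib

open Module IntermediateField

section Aux
variable {K L : Type*} [Field K] [Field L] [Algebra K L]

lemma finrank_finsetSup_le {ι : Type*} (F : ι → IntermediateField K L) (s : Finset ι) :
    finrank K ↥(s.sup F) ≤ ∏ i ∈ s, finrank K (F i) := by
  induction s using Finset.cons_induction with
  | empty => rw [Finset.sup_empty]; simp [IntermediateField.finrank_bot]
  | cons a s ha ih =>
    rw [Finset.sup_cons, Finset.prod_cons]
    exact (IntermediateField.finrank_sup_le _ _).trans (Nat.mul_le_mul_left _ ih)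

lemma finrank_iSup_le {ι : Type*} [Fintype ι] (F : ι → IntermediateField K L) :
    finrank K ↥(⨆ i, F i) ≤ ∏ i, finrank K (F i) := by
  have : (⨆ i, F i) = Finset.univ.sup F := by
    rw [Finset.sup_eq_iSup]; simp
  rw [this]
  exact finrank_finsetSup_le F Finset.univ

-- fields M ≤ N are finite in number when N is finite-dimensional separable
lemma finite_le_of_fd [Algebra.IsSeparable K L] (N : IntermediateField K L)
    [FiniteDimensional K N] : {M : IntermediateField K L | M ≤ N}.Finite := by
  have : Finite (IntermediateField K N) :=
    Field.finite_intermediateField_of_exists_primitive_element K N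
      (Field.exists_primitive_element K N)
  have hinj : Function.Injective (fun M : {M : IntermediateField K L // M ≤ N} =>
      IntermediateField.restrict M.2) := by
    intro M1 M2 hEq
    have := congrArg IntermediateField.lift hEq
    simpa [IntermediateField.lift_restrict, Subtype.ext_iff] using this
  have : Finite {M : IntermediateField K L // M ≤ N} := Finite.of_injective _ hinj
  exact Set.Finite.subset (Set.finite_range (fun M : {M : IntermediateField K L // M ≤ N} =>
    (M.1 : IntermediateField K L))) (fun M hM => ⟨⟨M, hM⟩, rfl⟩)

end Aux

section Main
variable {K L : Type*} [Field K] [Field L] [Algebra K L] [IsGalois K L]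

omit [IsGalois K L] in
lemma normalClosure_finrank_le (M : IntermediateField K L) [FiniteDimensional K M] :
    finrank K ↥(normalClosure K (↥M) L) ≤ finrank K ↥M ^ finrank K ↥M := by
  have hfin : Finite (↥M →ₐ[K] L) := Finite.algHom K (↥M) L
  have : Fintype (↥M →ₐ[K] L) := Fintype.ofFinite _
  rw [show normalClosure K (↥M) L = ⨆ f : ↥M →ₐ[K] L, f.fieldRange from normalClosure_def K (↥M) L]
  refine (finrank_iSup_le _).trans ?_
  have hr : ∀ f : ↥M →ₐ[K] L, finrank K ↥f.fieldRange = finrank K ↥M := fun f =>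
    (LinearEquiv.finrank_eq (AlgEquiv.ofInjectiveField f).toLinearEquiv).symm
  calc ∏ f : ↥M →ₐ[K] L, finrank K ↥f.fieldRange
      = finrank K ↥M ^ Fintype.card (↥M →ₐ[K] L) := by
        simp [hr, Finset.prod_const]
    _ ≤ finrank K ↥M ^ finrank K ↥M := by
        refine Nat.pow_le_pow_right (Module.finrank_pos) ?_
        rw [← Nat.card_eq_fintype_card]
        exact card_algHom_le_finrank K (↥M) L

omit [IsGalois K L] in
lemma finrank_le_of_le {M N : IntermediateField K L} (hMN : M ≤ N) [FiniteDimensional K N] :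
    finrank K ↥M ≤ finrank K ↥N :=
  LinearMap.finrank_le_finrank_of_injective
    (f := (IntermediateField.inclusion hMN).toLinearMap) (IntermediateField.inclusion hMN).injective


end Main

/-- Let `L/K` be a Galois extension that is not small (for some `n ≥ 1` there are
infinitely many intermediate fields of degree `n` over `K`). Then there exist `d > 1` and
an infinite family of Galois subextensions of `L/K`, all of degree exactly `d` over `K`. -/
theorem exists_infinitely_many_galois_subextensions_of_not_small
    (K L : Type*) [Field K] [Field L] [Algebra K L] [IsGalois K L]
    (h : ∃ n : ℕ, 1 ≤ n ∧
      {M : IntermediateField K L | FiniteDimensional K M ∧ Module.finrank K M = n}.Infinite) :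
    ∃ d : ℕ, 1 < d ∧
      {M : IntermediateField K L | FiniteDimensional K M ∧ Module.finrank K M = d ∧
        IsGalois K M}.Infinite := by
  obtain ⟨n, hn1, hinf⟩ := h
  set T := {M : IntermediateField K L | FiniteDimensional K M ∧ Module.finrank K M = n} with hT
  -- n ≥ 2
  have hn2 : 2 ≤ n := by
    by_contra hlt
    have hn : n = 1 := by omega
    refine hinf (Set.Finite.subset (Set.finite_singleton ⊥) (fun M hM => ?_))
    have : Module.finrank K M = 1 := hn ▸ hM.2
    simpa using IntermediateField.finrank_eq_one_iff.mp this
  -- the normal closure map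
  set φ : IntermediateField K L → IntermediateField K L :=
    fun M => normalClosure K (↥M) L with hφ
  -- properties of φ on T
  have hprops : ∀ M ∈ T, M ≤ φ M ∧ FiniteDimensional K ↥(φ M) ∧ IsGalois K ↥(φ M) ∧
      n ≤ finrank K ↥(φ M) ∧ finrank K ↥(φ M) ≤ n ^ n := by
    intro M hM
    haveI : FiniteDimensional K ↥M := hM.1
    have hle : M ≤ φ M := IntermediateField.le_normalClosure M
    haveI : FiniteDimensional K ↥(φ M) := normalClosure.is_finiteDimensional K (↥M) L
    refine ⟨hle, inferInstance, inferInstance, ?_, ?_⟩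
    · exact hM.2 ▸ finrank_le_of_le hle
    · have := normalClosure_finrank_le M
      rwa [hM.2] at this
  -- pigeonhole on the degree of the normal closure
  have : ∃ d ∈ Finset.range (n ^ n + 1), {M ∈ T | finrank K ↥(φ M) = d}.Infinite := by
    by_contra hcon
    push_neg at hcon
    refine hinf (Set.Finite.subset (Set.Finite.biUnion (Finset.range (n ^ n + 1)).finite_toSet
      (fun d hd => hcon d (by simpa using hd))) ?_)
    intro M hM
    exact Set.mem_biUnion (by simp [Nat.lt_succ_iff, (hprops M hM).2.2.2.2]) ⟨hM, rfl⟩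
  obtain ⟨d, _, hSd⟩ := this
  set S := {M ∈ T | finrank K ↥(φ M) = d} with hS
  obtain ⟨M₀, hM₀⟩ := hSd.nonempty
  have hdn : n ≤ d := hM₀.2 ▸ (hprops M₀ hM₀.1).2.2.2.1
  refine ⟨d, by omega, ?_⟩
  -- the image of S under φ lands in the target set
  intro hfin
  have himg : φ '' S ⊆ {M : IntermediateField K L | FiniteDimensional K M ∧
      Module.finrank K M = d ∧ IsGalois K M} := by
    rintro _ ⟨M, hM, rfl⟩
    exact ⟨(hprops M hM.1).2.1, hM.2, (hprops M hM.1).2.2.1⟩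
  have himgfin : (φ '' S).Finite := hfin.subset himg
  refine hSd (Set.Finite.subset (Set.Finite.biUnion (t := fun N => {M | M ≤ N}) himgfin
    (fun N hN => ?_)) (fun M hM => Set.mem_biUnion (Set.mem_image_of_mem φ hM) ((hprops M hM.1).1)))
  haveI : FiniteDimensional K ↥N := (himg hN).1
  exact finite_le_of_fd N
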